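/- Let k ≥ 2 and let A be a generalized Cartan matrix of type N_{k,n}. Then every principal submatrix of A of type N_{k-1} has dimension at least n-1 (hence, being proper, exactly n-1). -/

import Mathlib

/-- An `n × n` integer matrix is a generalized Cartan matrix (GCM). -/
def IsGCM {n : ℕ} (A : Matrix (Fin n) (Fin n) ℤ) : Prop :=
  (∀ i, A i i = 2) ∧ (∀ i j, i ≠ j → A i j ≤ 0) ∧ (∀ i j, A i j = 0 → A j i = 0)

/-- The graph on the index set of `A`, with an edge between `i ≠ j` whenever
`A i j ≠ 0` (stated symmetrically so as to be well-defined for all matrices;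
for a GCM, `A i j ≠ 0 ↔ A j i ≠ 0`). -/
def gcmGraph {n : ℕ} (A : Matrix (Fin n) (Fin n) ℤ) : SimpleGraph (Fin n) where
  Adj i j := i ≠ j ∧ (A i j ≠ 0 ∨ A j i ≠ 0)
  symm := ⟨fun i j h => ⟨h.1.symm, h.2.symm⟩⟩
  loopless := ⟨fun i h => h.1 rfl⟩

/-- A matrix is indecomposable (its diagram is connected). -/
def IsIndecomposable {n : ℕ} (A : Matrix (Fin n) (Fin n) ℤ) : Prop :=
  (gcmGraph A).Connected

/-- An indecomposable GCM is of finite type: there is `u > 0` with `A ⬝ u > 0`. -/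
def IsFinType {n : ℕ} (A : Matrix (Fin n) (Fin n) ℤ) : Prop :=
  IsGCM A ∧ IsIndecomposable A ∧
    ∃ u : Fin n → ℚ, (∀ i, 0 < u i) ∧ (∀ i, 0 < ∑ j, (A i j : ℚ) * u j)

/-- An indecomposable GCM is of affine type: there is `u > 0` with `A ⬝ u = 0`. -/
def IsAffType {n : ℕ} (A : Matrix (Fin n) (Fin n) ℤ) : Prop :=
  IsGCM A ∧ IsIndecomposable A ∧
    ∃ u : Fin n → ℚ, (∀ i, 0 < u i) ∧ (∀ i, ∑ j, (A i j : ℚ) * u j = 0)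

/-- An indecomposable GCM is of indefinite type: there is `u > 0` with `A ⬝ u < 0`. -/
def IsIndefType {n : ℕ} (A : Matrix (Fin n) (Fin n) ℤ) : Prop :=
  IsGCM A ∧ IsIndecomposable A ∧
    ∃ u : Fin n → ℚ, (∀ i, 0 < u i) ∧ (∀ i, ∑ j, (A i j : ℚ) * u j < 0)

/-- `B` is a principal submatrix of `A`: the restriction of `A` to a subset of
its index set (encoded by a strictly monotone map `Fin m → Fin n`). -/
def IsPrincipalSubmatrix {m n : ℕ} (B : Matrix (Fin m) (Fin m) ℤ)
    (A : Matrix (Fin n) (Fin n) ℤ) : Prop :=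
  ∃ f : Fin m → Fin n, StrictMono f ∧ B = A.submatrix f f

/-- A proper principal submatrix: the corresponding subset is nonempty and proper. -/
def IsProperPrincipalSubmatrix {m n : ℕ} (B : Matrix (Fin m) (Fin m) ℤ)
    (A : Matrix (Fin n) (Fin n) ℤ) : Prop :=
  IsPrincipalSubmatrix B A ∧ 0 < m ∧ m < n

/-- A GCM is of hyperbolic type: indecomposable, neither finite nor affine,
and every proper connected principal submatrix is of finite or affine type. -/
def IsHypType {n : ℕ} (A : Matrix (Fin n) (Fin n) ℤ) : Prop :=
  IsGCM A ∧ IsIndecomposable A ∧ ¬ IsFinType A ∧ ¬ IsAffType A ∧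
    ∀ m, ∀ B : Matrix (Fin m) (Fin m) ℤ,
      IsProperPrincipalSubmatrix B A → IsIndecomposable B →
        (IsFinType B ∨ IsAffType B)

/-- `N₀` = finite type, `N₁` = affine type, `N₂` = hyperbolic type; for `k ≥ 3`,
a GCM is of type `N_k` if it has a proper principal submatrix of type `N_{k-1}`
and every proper connected principal submatrix is of type `N_m` for some `m < k`. -/
def IsNType : (k : ℕ) → {n : ℕ} → Matrix (Fin n) (Fin n) ℤ → Prop
  | 0, _, A => IsFinType A
  | 1, _, A => IsAffType A
  | 2, _, A => IsHypType A
  | (k+3), _, A => IsGCM A ∧ IsIndecomposable A ∧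
      (∃ m, ∃ B : Matrix (Fin m) (Fin m) ℤ,
        IsProperPrincipalSubmatrix B A ∧ IsNType (k+2) B) ∧
      (∀ m, ∀ B : Matrix (Fin m) (Fin m) ℤ,
        IsProperPrincipalSubmatrix B A → IsIndecomposable B →
          ∃ m', ∃ _ : m' < k + 3, IsNType m' B)
  termination_by k => k

/-- Row sum of `A ⬝ u` over ℚ. -/
def rowSum {n : ℕ} (A : Matrix (Fin n) (Fin n) ℤ) (u : Fin n → ℚ) (i : Fin n) : ℚ :=
  ∑ j, (A i j : ℚ) * u j

lemma gcm_submatrix {m n : ℕ} {A : Matrix (Fin n) (Fin n) ℤ} (hA : IsGCM A)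
    {f : Fin m → Fin n} (hf : Function.Injective f) : IsGCM (A.submatrix f f) := by
  obtain ⟨h1, h2, h3⟩ := hA
  refine ⟨fun i => h1 _, fun i j hij => h2 _ _ (fun h => hij (hf h)), fun i j h => h3 _ _ h⟩

lemma excl {n : ℕ} {A : Matrix (Fin n) (Fin n) ℤ} (hA : IsGCM A) (hn : 0 < n)
    {u v : Fin n → ℚ} (hu : ∀ i, 0 < u i) (hv : ∀ i, 0 < v i)
    (hAu : ∀ i, rowSum A u i ≤ 0) (hAv : ∀ i, 0 ≤ rowSum A v i)
    (hstrict : ∀ i, rowSum A u i < 0 ∨ 0 < rowSum A v i) : False := by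
  have : Nonempty (Fin n) := Fin.pos_iff_nonempty.mp hn
  obtain ⟨i0, -, hi0⟩ := Finset.exists_min_image Finset.univ (fun i => v i / u i)
    ⟨Classical.arbitrary (Fin n), Finset.mem_univ _⟩
  set t : ℚ := v i0 / u i0 with ht
  have htpos : 0 < t := div_pos (hv i0) (hu i0)
  have hw : ∀ j, 0 ≤ v j - t * u j := by
    intro j
    have := hi0 j (Finset.mem_univ j)
    have h2 : t * u j ≤ v j := by
      rw [ht]
      rw [div_le_div_iff₀ (hu i0) (hu j)] at this
      rw [div_mul_eq_mul_div, div_le_iff₀ (hu i0)]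
      nlinarith
    linarith
  have hw0 : v i0 - t * u i0 = 0 := by
    rw [ht, div_mul_cancel₀ _ (ne_of_gt (hu i0)), sub_self]
  -- the key sum
  have hsum : ∑ j, (A i0 j : ℚ) * (v j - t * u j) = rowSum A v i0 - t * rowSum A u i0 := by
    simp only [rowSum, mul_sub, Finset.sum_sub_distrib, Finset.mul_sum]
    congr 1
    apply Finset.sum_congr rfl; intro j _; ring
  have hpos : 0 < ∑ j, (A i0 j : ℚ) * (v j - t * u j) := by
    rw [hsum]
    rcases hstrict i0 with h | h
    · nlinarith [hAv i0]
    · nlinarith [hAu i0]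
  have hnonpos : ∑ j, (A i0 j : ℚ) * (v j - t * u j) ≤ 0 := by
    apply Finset.sum_nonpos
    intro j _
    rcases eq_or_ne j i0 with rfl | hne
    · rw [hw0]; simp
    · exact mul_nonpos_of_nonpos_of_nonneg
        (by exact_mod_cast hA.2.1 i0 j (Ne.symm hne)) (hw j)
  linarith
lemma walk_cross {V : Type*} {G : SimpleGraph V} (P : V → Prop) :
    ∀ {a b : V}, G.Walk a b → P a → ¬ P b → ∃ x y, G.Adj x y ∧ P x ∧ ¬ P y := by
  intro a b w
  induction w with
  | nil => intro ha hb; exact absurd ha hb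
  | @cons a c b h w ih =>
    intro ha hb
    by_cases hc : P c
    · exact ih hc hb
    · exact ⟨_, _, h, ha, hc⟩

lemma regularize_aux (N : ℕ) : ∀ {n : ℕ} (A : Matrix (Fin n) (Fin n) ℤ),
    IsGCM A → (gcmGraph A).Connected → ∀ u : Fin n → ℚ, (∀ i, 0 < u i) →
    (∀ i, 0 ≤ rowSum A u i) → (∃ i, 0 < rowSum A u i) →
    (Finset.filter (fun i => ¬ 0 < rowSum A u i) Finset.univ).card ≤ N →
    ∃ v : Fin n → ℚ, (∀ i, 0 < v i) ∧ ∀ i, 0 < rowSum A v i := by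
  induction N with
  | zero =>
    intro n A hA hconn u hu h0 hne hcard
    refine ⟨u, hu, fun i => ?_⟩
    by_contra hi
    have : i ∈ Finset.filter (fun i => ¬ 0 < rowSum A u i) Finset.univ :=
      Finset.mem_filter.mpr ⟨Finset.mem_univ _, hi⟩
    have := Finset.card_pos.mpr ⟨i, this⟩
    omega
  | succ N ih =>
    intro n A hA hconn u hu h0 hne hcard
    set T := Finset.filter (fun i => ¬ 0 < rowSum A u i) Finset.univ with hT
    by_cases hTe : T = ∅
    · exact ih A hA hconn u hu h0 hne (by rw [← hT, hTe]; simp)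
    obtain ⟨t0, ht0⟩ := Finset.nonempty_iff_ne_empty.mpr hTe
    obtain ⟨a0, ha0⟩ := hne
    have hwalk := ((hconn.preconnected a0 t0).some : (gcmGraph A).Walk a0 t0)
    have ht0' : ¬ 0 < rowSum A u t0 := (Finset.mem_filter.mp ht0).2
    obtain ⟨x, y, hadj, hx, hy⟩ := walk_cross (fun i => 0 < rowSum A u i) hwalk ha0 ht0'
    -- A y x < 0
    have hyx : A y x < 0 := by
      have hne' : A y x ≠ 0 := by
        rcases (hadj : x ≠ y ∧ (A x y ≠ 0 ∨ A y x ≠ 0)).2 with h | h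
        · exact fun hz => h (hA.2.2 _ _ hz)
        · exact h
      have := hA.2.1 y x (Ne.symm (hadj : x ≠ y ∧ (A x y ≠ 0 ∨ A y x ≠ 0)).1)
      omega
    set ε : ℚ := min (u x / 2) (rowSum A u x / 4) with hε
    have hεpos : 0 < ε := lt_min (by linarith [hu x]) (by linarith [hx])
    set u' : Fin n → ℚ := fun i => if i = x then u i - ε else u i with hu'
    have hu'pos : ∀ i, 0 < u' i := by
      intro i
      rw [hu']
      dsimp only
      split
      · rename_i hix
        have : ε ≤ u x / 2 := min_le_left _ _
        rw [hix]
        linarith [hu x]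
      · exact hu i
    have hrow : ∀ i, rowSum A u' i = rowSum A u i - (A i x : ℚ) * ε := by
      intro i
      have hterm : ∀ j : Fin n, (A i j : ℚ) * u' j =
          (A i j : ℚ) * u j - (if j = x then (A i x : ℚ) * ε else 0) := by
        intro j
        rw [hu']
        dsimp only
        split
        · rename_i hjx; subst hjx; ring
        · ring
      calc rowSum A u' i
          = ∑ j, ((A i j : ℚ) * u j - if j = x then (A i x : ℚ) * ε else 0) :=
            Finset.sum_congr rfl (fun j _ => hterm j)
        _ = (∑ j, (A i j : ℚ) * u j) - ∑ j, (if j = x then (A i x : ℚ) * ε else 0) :=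
            Finset.sum_sub_distrib _ _
        _ = rowSum A u i - (A i x : ℚ) * ε := by
            rw [Finset.sum_ite_eq' Finset.univ x (fun _ => (A i x : ℚ) * ε)]
            simp [rowSum]
    have hx' : 0 < rowSum A u' x := by
      rw [hrow, hA.1 x]
      have : ε ≤ rowSum A u x / 4 := min_le_right _ _
      push_cast
      linarith
    have h0' : ∀ i, 0 ≤ rowSum A u' i := by
      intro i
      rcases eq_or_ne i x with rfl | hne'
      · exact le_of_lt hx'
      · rw [hrow]
        have : (A i x : ℚ) ≤ 0 := by exact_mod_cast hA.2.1 i x hne'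
        nlinarith [h0 i]
    have hy' : 0 < rowSum A u' y := by
      rw [hrow]
      have : (A y x : ℚ) < 0 := by exact_mod_cast hyx
      have h1 : 0 ≤ rowSum A u y := h0 y
      nlinarith
    have hsubset : Finset.filter (fun i => ¬ 0 < rowSum A u' i) Finset.univ ⊆ T.erase y := by
      intro i hi
      have hi' : ¬ 0 < rowSum A u' i := (Finset.mem_filter.mp hi).2
      refine Finset.mem_erase.mpr ⟨fun hiy => hi' (hiy ▸ hy'), ?_⟩
      rw [hT]
      refine Finset.mem_filter.mpr ⟨Finset.mem_univ _, fun hpos => hi' ?_⟩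
      rcases eq_or_ne i x with rfl | hne'
      · exact hx'
      · rw [hrow]
        have : (A i x : ℚ) ≤ 0 := by exact_mod_cast hA.2.1 i x hne'
        nlinarith
    have hcard' : (Finset.filter (fun i => ¬ 0 < rowSum A u' i) Finset.univ).card ≤ N := by
      have h1 := Finset.card_le_card hsubset
      have h2 : (T.erase y).card < T.card := Finset.card_erase_lt_of_mem (by
        rw [hT]; exact Finset.mem_filter.mpr ⟨Finset.mem_univ _, hy⟩)
      omega
    exact ih A hA hconn u' hu'pos h0' ⟨x, hx'⟩ hcard'

lemma regularize {n : ℕ} {A : Matrix (Fin n) (Fin n) ℤ} (hA : IsGCM A)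
    (hconn : IsIndecomposable A) {u : Fin n → ℚ} (hu : ∀ i, 0 < u i)
    (h0 : ∀ i, 0 ≤ rowSum A u i) (hne : ∃ i, 0 < rowSum A u i) : IsFinType A := by
  obtain ⟨v, hv, hv'⟩ := regularize_aux (Finset.filter (fun i => ¬ 0 < rowSum A u i)
    Finset.univ).card A hA hconn u hu h0 hne le_rfl
  exact ⟨hA, hconn, v, hv, fun i => hv' i⟩
section Sub
variable {m M : ℕ} {C : Matrix (Fin M) (Fin M) ℤ} {g : Fin m → Fin M}

lemma sub_rowSum (hC : IsGCM C) (hg : Function.Injective g)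
    {u : Fin M → ℚ} (hu : ∀ i, 0 < u i) (p : Fin m) :
    rowSum C u (g p) ≤ rowSum (C.submatrix g g) (u ∘ g) p := by
  have himg : rowSum (C.submatrix g g) (u ∘ g) p
      = ∑ j ∈ Finset.image g Finset.univ, (C (g p) j : ℚ) * u j := by
    rw [Finset.sum_image (fun a _ b _ h => hg h)]
    rfl
  have hsplit : rowSum C u (g p) = (∑ j ∈ Finset.image g Finset.univ, (C (g p) j : ℚ) * u j)
      + ∑ j ∈ (Finset.image g Finset.univ)ᶜ, (C (g p) j : ℚ) * u j := by
    rw [Finset.sum_add_sum_compl]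
    rfl
  have hcomp : ∑ j ∈ (Finset.image g Finset.univ)ᶜ, (C (g p) j : ℚ) * u j ≤ 0 := by
    apply Finset.sum_nonpos
    intro j hj
    have hne : g p ≠ j := by
      intro h
      exact (Finset.mem_compl.mp hj) (h ▸ Finset.mem_image_of_mem g (Finset.mem_univ p))
    exact mul_nonpos_of_nonpos_of_nonneg (by exact_mod_cast hC.2.1 _ _ hne) (hu j).le
  rw [hsplit, himg]
  linarith

lemma sub_rowSum_lt (hC : IsGCM C) (hg : Function.Injective g)
    {u : Fin M → ℚ} (hu : ∀ i, 0 < u i) (p : Fin m)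
    {j0 : Fin M} (hj0 : j0 ∉ Set.range g) (hval : C (g p) j0 ≠ 0) :
    rowSum C u (g p) < rowSum (C.submatrix g g) (u ∘ g) p := by
  have himg : rowSum (C.submatrix g g) (u ∘ g) p
      = ∑ j ∈ Finset.image g Finset.univ, (C (g p) j : ℚ) * u j := by
    rw [Finset.sum_image (fun a _ b _ h => hg h)]
    rfl
  have hsplit : rowSum C u (g p) = (∑ j ∈ Finset.image g Finset.univ, (C (g p) j : ℚ) * u j)
      + ∑ j ∈ (Finset.image g Finset.univ)ᶜ, (C (g p) j : ℚ) * u j := by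
    rw [Finset.sum_add_sum_compl]
    rfl
  have hj0mem : j0 ∈ (Finset.image g Finset.univ)ᶜ := by
    rw [Finset.mem_compl]
    intro h
    obtain ⟨q, -, hq⟩ := Finset.mem_image.mp h
    exact hj0 ⟨q, hq⟩
  have hcomp : ∑ j ∈ (Finset.image g Finset.univ)ᶜ, (C (g p) j : ℚ) * u j < 0 := by
    have hterm : ∀ j ∈ (Finset.image g Finset.univ)ᶜ, (C (g p) j : ℚ) * u j ≤ 0 := by
      intro j hj
      have hne : g p ≠ j := by
        intro h
        exact (Finset.mem_compl.mp hj) (h ▸ Finset.mem_image_of_mem g (Finset.mem_univ p))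
      exact mul_nonpos_of_nonpos_of_nonneg (by exact_mod_cast hC.2.1 _ _ hne) (hu j).le
    have hj0lt : (C (g p) j0 : ℚ) * u j0 < 0 := by
      have hne : g p ≠ j0 := fun h => hj0 ⟨p, h⟩
      have h1 : C (g p) j0 < 0 := lt_of_le_of_ne (hC.2.1 _ _ hne) hval
      have : (C (g p) j0 : ℚ) < 0 := by exact_mod_cast h1
      exact mul_neg_of_neg_of_pos this (hu j0)
    rw [← Finset.add_sum_erase _ _ hj0mem]
    have hrest : ∑ j ∈ ((Finset.image g Finset.univ)ᶜ).erase j0, (C (g p) j : ℚ) * u j ≤ 0 :=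
      Finset.sum_nonpos (fun j hj => hterm j (Finset.mem_of_mem_erase hj))
    linarith
  rw [hsplit, himg]
  linarith

lemma fin_of_sub (hC : IsFinType C) (hg : Function.Injective g)
    (hI : IsIndecomposable (C.submatrix g g)) : IsFinType (C.submatrix g g) := by
  obtain ⟨hCg, -, u, hu, hrow⟩ := hC
  refine ⟨gcm_submatrix hCg hg, hI, u ∘ g, fun p => hu _, fun p => ?_⟩
  exact lt_of_lt_of_le (hrow (g p)) (sub_rowSum hCg hg hu p)

lemma fin_or_aff_of_sub_aff (hC : IsAffType C) (hg : Function.Injective g)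
    (hI : IsIndecomposable (C.submatrix g g)) :
    IsFinType (C.submatrix g g) ∨ IsAffType (C.submatrix g g) := by
  obtain ⟨hCg, -, u, hu, hrow⟩ := hC
  have h0 : ∀ p, 0 ≤ rowSum (C.submatrix g g) (u ∘ g) p := by
    intro p
    exact le_trans (le_of_eq (hrow (g p)).symm) (sub_rowSum hCg hg hu p)
  by_cases hall : ∀ p, rowSum (C.submatrix g g) (u ∘ g) p = 0
  · exact Or.inr ⟨gcm_submatrix hCg hg, hI, u ∘ g, fun p => hu _, hall⟩
  · push_neg at hall
    obtain ⟨p, hp⟩ := hall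
    exact Or.inl (regularize (gcm_submatrix hCg hg) hI (fun p => hu _) h0
      ⟨p, lt_of_le_of_ne (h0 p) (Ne.symm hp)⟩)

lemma fin_of_sub_aff_strict (hC : IsAffType C) (hg : Function.Injective g)
    (hI : IsIndecomposable (C.submatrix g g))
    {j0 : Fin M} (hj0 : j0 ∉ Set.range g) {p0 : Fin m} (hval : C (g p0) j0 ≠ 0) :
    IsFinType (C.submatrix g g) := by
  obtain ⟨hCg, -, u, hu, hrow⟩ := hC
  have h0 : ∀ p, 0 ≤ rowSum (C.submatrix g g) (u ∘ g) p := by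
    intro p
    exact le_trans (le_of_eq (hrow (g p)).symm) (sub_rowSum hCg hg hu p)
  have hstrict : 0 < rowSum (C.submatrix g g) (u ∘ g) p0 :=
    lt_of_le_of_lt (le_of_eq (hrow (g p0)).symm) (sub_rowSum_lt hCg hg hu p0 hj0 hval)
  exact regularize (gcm_submatrix hCg hg) hI (fun p => hu _) h0 ⟨p0, hstrict⟩

end Sub
lemma isNType_zero {n : ℕ} {A : Matrix (Fin n) (Fin n) ℤ} : IsNType 0 A ↔ IsFinType A := by
  rw [IsNType]

lemma isNType_one {n : ℕ} {A : Matrix (Fin n) (Fin n) ℤ} : IsNType 1 A ↔ IsAffType A := by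
  rw [IsNType]

lemma isNType_two {n : ℕ} {A : Matrix (Fin n) (Fin n) ℤ} : IsNType 2 A ↔ IsHypType A := by
  rw [IsNType]

lemma isNType_succ {k n : ℕ} {A : Matrix (Fin n) (Fin n) ℤ} :
    IsNType (k + 3) A ↔ IsGCM A ∧ IsIndecomposable A ∧
      (∃ m, ∃ B : Matrix (Fin m) (Fin m) ℤ,
        IsProperPrincipalSubmatrix B A ∧ IsNType (k+2) B) ∧
      (∀ m, ∀ B : Matrix (Fin m) (Fin m) ℤ,
        IsProperPrincipalSubmatrix B A → IsIndecomposable B →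
          ∃ m', ∃ _ : m' < k + 3, IsNType m' B) := by
  rw [IsNType]
lemma isNType_gcm {k n : ℕ} {A : Matrix (Fin n) (Fin n) ℤ} (h : IsNType k A) : IsGCM A := by
  match k with
  | 0 => exact (isNType_zero.mp h).1
  | 1 => exact (isNType_one.mp h).1
  | 2 => exact (isNType_two.mp h).1
  | (k+3) => exact (isNType_succ.mp h).1

lemma isNType_indec {k n : ℕ} {A : Matrix (Fin n) (Fin n) ℤ} (h : IsNType k A) :
    IsIndecomposable A := by
  match k with
  | 0 => exact (isNType_zero.mp h).2.1
  | 1 => exact (isNType_one.mp h).2.1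
  | 2 => exact (isNType_two.mp h).2.1
  | (k+3) => exact (isNType_succ.mp h).2.1

lemma isNType_pos {k n : ℕ} {A : Matrix (Fin n) (Fin n) ℤ} (h : IsNType k A) : 0 < n := by
  have := (isNType_indec h).nonempty
  exact Fin.pos_iff_nonempty.mpr this

/-- For `k ≥ 2`, an `N_k` matrix is neither of finite nor of affine type. -/
lemma isNType_not_fin_aff : ∀ k, 2 ≤ k → ∀ {n : ℕ} {A : Matrix (Fin n) (Fin n) ℤ},
    IsNType k A → ¬ IsFinType A ∧ ¬ IsAffType A := by
  intro k
  induction k using Nat.strong_induction_on with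
  | _ k ih =>
    intro hk n A hNA
    match k, hk with
    | 2, _ =>
      obtain ⟨-, -, hf, ha, -⟩ := isNType_two.mp hNA
      exact ⟨hf, ha⟩
    | (k+3), _ =>
      obtain ⟨hAg, hAi, ⟨m, B, ⟨⟨g, hg, hBeq⟩, hm0, hmn⟩, hB⟩, -⟩ := isNType_succ.mp hNA
      subst hBeq
      have hBind : IsIndecomposable (A.submatrix g g) := isNType_indec hB
      have hIH := ih (k+2) (by omega) (by omega) hB
      constructor
      · intro hfin
        exact hIH.1 (fin_of_sub hfin hg.injective hBind)
      · intro haff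
        rcases fin_or_aff_of_sub_aff haff hg.injective hBind with h | h
        · exact hIH.1 h
        · exact hIH.2 h

/-- Mutual exclusivity of the `N`-types. -/
lemma isNType_unique : ∀ b a, a < b → ∀ {n : ℕ} {A : Matrix (Fin n) (Fin n) ℤ},
    IsNType a A → IsNType b A → False := by
  intro b
  induction b using Nat.strong_induction_on with
  | _ b ih =>
    intro a hab n A hNa hNb
    match b, hab with
    | 1, _ =>
      interval_cases a
      obtain ⟨hAg, hAi, u, hu, hAu⟩ := isNType_zero.mp hNa
      obtain ⟨-, -, v, hv, hAv⟩ := isNType_one.mp hNb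
      exact excl hAg (Fin.pos_iff_nonempty.mpr hAi.nonempty) hv hu
        (fun i => le_of_eq (hAv i)) (fun i => (hAu i).le) (fun i => Or.inr (hAu i))
    | 2, _ =>
      have h2 := isNType_not_fin_aff 2 le_rfl hNb
      interval_cases a
      · exact h2.1 (isNType_zero.mp hNa)
      · exact h2.2 (isNType_one.mp hNa)
    | (b+3), _ =>
      obtain ⟨hAg, hAi, ⟨m, E, ⟨⟨g, hg, hEeq⟩, hm0, hmn⟩, hE⟩, -⟩ := isNType_succ.mp hNb
      subst hEeq
      have hEind : IsIndecomposable (A.submatrix g g) := isNType_indec hE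
      have hEnfa := isNType_not_fin_aff (b+2) (by omega) hE
      match a with
      | 0 =>
        exact hEnfa.1 (fin_of_sub (isNType_zero.mp hNa) hg.injective hEind)
      | 1 =>
        rcases fin_or_aff_of_sub_aff (isNType_one.mp hNa) hg.injective hEind with h | h
        · exact hEnfa.1 h
        · exact hEnfa.2 h
      | 2 =>
        obtain ⟨-, -, -, -, hall⟩ := isNType_two.mp hNa
        rcases hall m _ ⟨⟨g, hg, rfl⟩, hm0, hmn⟩ hEind with h | h
        · exact hEnfa.1 h
        · exact hEnfa.2 h
      | (a+3) =>
        obtain ⟨-, -, -, hall⟩ := isNType_succ.mp hNa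
        obtain ⟨m0, hm0', hNm0⟩ := hall m _ ⟨⟨g, hg, rfl⟩, hm0, hmn⟩ hEind
        rcases Nat.lt_trichotomy m0 (b+2) with h | h | h
        · exact ih (b+2) (by omega) m0 h hNm0 hE
        · subst h; omega
        · -- m0 < a+3 ≤ b+3 so m0 ≤ b+2; contradiction with h
          omega
lemma descend {M m m' : ℕ} {C : Matrix (Fin M) (Fin M) ℤ} (hC : IsNType m' C)
    {e : Fin m → Fin M} (he : StrictMono e) (hm0 : 0 < m) (hmM : m < M)
    (hI : IsIndecomposable (C.submatrix e e))
    {j0 : Fin M} (hj0 : j0 ∉ Set.range e) {p0 : Fin m} (hp0 : C (e p0) j0 ≠ 0) :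
    ∃ m0, m0 < max m' 1 ∧ IsNType m0 (C.submatrix e e) := by
  match m' with
  | 0 => exact ⟨0, by omega, isNType_zero.mpr
      (fin_of_sub (isNType_zero.mp hC) he.injective hI)⟩
  | 1 => exact ⟨0, by omega, isNType_zero.mpr
      (fin_of_sub_aff_strict (isNType_one.mp hC) he.injective hI hj0 hp0)⟩
  | 2 =>
    obtain ⟨-, -, -, -, hall⟩ := isNType_two.mp hC
    rcases hall m _ ⟨⟨e, he, rfl⟩, hm0, hmM⟩ hI with h | h
    · exact ⟨0, by omega, isNType_zero.mpr h⟩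
    · exact ⟨1, by omega, isNType_one.mpr h⟩
  | (m'+3) =>
    obtain ⟨-, -, -, hall⟩ := isNType_succ.mp hC
    obtain ⟨m0, hlt, hN⟩ := hall m _ ⟨⟨e, he, rfl⟩, hm0, hmM⟩ hI
    exact ⟨m0, by omega, hN⟩

lemma main_step {k n m : ℕ} (hk : 2 ≤ k) {A : Matrix (Fin n) (Fin n) ℤ}
    (hN : IsNType k A) {f : Fin m → Fin n} (hf : StrictMono f)
    (hB : IsNType (k - 1) (A.submatrix f f)) (hmn : m + 1 < n) : False := by
  classical
  have hA : IsGCM A := isNType_gcm hN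
  have hAind := isNType_indec hN
  have hBind := isNType_indec hB
  have hm0 : 0 < m := Fin.pos_iff_nonempty.mpr hBind.nonempty
  obtain ⟨b0, hb0⟩ : ∃ b, b ∉ Finset.image f Finset.univ := by
    by_contra h
    push_neg at h
    have h2 : (Finset.univ : Finset (Fin n)).card ≤ (Finset.image f Finset.univ).card :=
      Finset.card_le_card (fun x _ => h x)
    have h1 : (Finset.image f Finset.univ).card ≤ m :=
      le_trans Finset.card_image_le (by simp)
    simp only [Finset.card_univ, Fintype.card_fin] at h2
    omega
  have ha0 : f ⟨0, hm0⟩ ∈ Finset.image f Finset.univ :=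
    Finset.mem_image_of_mem f (Finset.mem_univ _)
  obtain ⟨x, y, hadj, hx, hy⟩ := walk_cross (fun v => v ∈ Finset.image f Finset.univ)
    (hAind.preconnected (f ⟨0, hm0⟩) b0).some ha0 hb0
  obtain ⟨i1, -, hi1⟩ := Finset.mem_image.mp hx
  have hxy : A x y ≠ 0 := by
    intro h
    have h2 := hA.2.2 _ _ h
    rcases (hadj : x ≠ y ∧ (A x y ≠ 0 ∨ A y x ≠ 0)).2 with h' | h' <;> exact h' ‹_›
  set S' : Finset (Fin n) := insert y (Finset.image f Finset.univ) with hS'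
  have hScard : S'.card = m + 1 := by
    rw [hS', Finset.card_insert_of_notMem hy,
      Finset.card_image_of_injective _ hf.injective, Finset.card_univ, Fintype.card_fin]
  set f' : Fin (m+1) → Fin n := fun i => (S'.orderIsoOfFin hScard i : Fin n) with hf'
  have hf'mono : StrictMono f' := fun i j hij =>
    Subtype.coe_lt_coe.mpr ((S'.orderIsoOfFin hScard).strictMono hij)
  have hf'inj : Function.Injective f' := hf'mono.injective
  have hmem : ∀ p : Fin m, f p ∈ S' := fun p =>
    Finset.mem_insert_of_mem (Finset.mem_image_of_mem f (Finset.mem_univ p))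
  set e : Fin m → Fin (m+1) :=
    fun p => (S'.orderIsoOfFin hScard).symm ⟨f p, hmem p⟩ with he
  have hfe : ∀ p, f' (e p) = f p := by
    intro p
    rw [hf', he]
    simp
  have hemono : StrictMono e := fun p q hpq =>
    (S'.orderIsoOfFin hScard).symm.strictMono (Subtype.mk_lt_mk.mpr (hf hpq))
  set iy : Fin (m+1) := (S'.orderIsoOfFin hScard).symm ⟨y, Finset.mem_insert_self y _⟩ with hiy
  have hfiy : f' iy = y := by
    rw [hf', hiy]
    simp
  have heiy : ∀ p, e p ≠ iy := by
    intro p h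
    have : f p = y := by rw [← hfe p, h, hfiy]
    exact hy (this ▸ Finset.mem_image_of_mem f (Finset.mem_univ p))
  set B'' := A.submatrix f' f' with hB''def
  have hBeq : A.submatrix f f = B''.submatrix e e := by
    ext p q
    simp [hB''def, Matrix.submatrix_apply, hfe]
  have hhom : ∀ p q, (gcmGraph (A.submatrix f f)).Adj p q → (gcmGraph B'').Adj (e p) (e q) := by
    intro p q hpq
    change p ≠ q ∧ ((A.submatrix f f) p q ≠ 0 ∨ (A.submatrix f f) q p ≠ 0) at hpq
    change e p ≠ e q ∧ (B'' (e p) (e q) ≠ 0 ∨ B'' (e q) (e p) ≠ 0)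
    refine ⟨fun h => hpq.1 (hemono.injective h), ?_⟩
    have := hpq.2
    simpa [hB''def, Matrix.submatrix_apply, hfe] using this
  have hadjE : (gcmGraph B'').Adj (e i1) iy := by
    change e i1 ≠ iy ∧ (B'' (e i1) iy ≠ 0 ∨ B'' iy (e i1) ≠ 0)
    refine ⟨heiy i1, Or.inl ?_⟩
    show A (f' (e i1)) (f' iy) ≠ 0
    rw [hfe, hfiy, hi1]
    exact hxy
  have hreach : ∀ v : Fin (m+1), (gcmGraph B'').Reachable v iy := by
    intro v
    rcases eq_or_ne v iy with rfl | hv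
    · exact SimpleGraph.Reachable.refl _
    · have hmem' : f' v ∈ S' := (S'.orderIsoOfFin hScard v).2
      have hne : f' v ≠ y := fun h => hv (hf'inj (h.trans hfiy.symm))
      rw [hS', Finset.mem_insert] at hmem'
      rcases hmem' with h | h
      · exact absurd h hne
      obtain ⟨p, -, hp⟩ := Finset.mem_image.mp h
      have hvp : v = e p := hf'inj (by rw [hfe, hp])
      have hr1 : (gcmGraph (A.submatrix f f)).Reachable p i1 := hBind.preconnected p i1
      have hr2 : (gcmGraph B'').Reachable (e p) (e i1) :=
        hr1.map (⟨e, fun {a b} h => hhom a b h⟩ :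
          gcmGraph (A.submatrix f f) →g gcmGraph B'')
      rw [hvp]
      exact hr2.trans hadjE.reachable
  have hconn : IsIndecomposable B'' :=
    ⟨fun a b => (hreach a).trans (hreach b).symm⟩
  have hproper : IsProperPrincipalSubmatrix B'' A := ⟨⟨f', hf'mono, rfl⟩, by omega, hmn⟩
  have hB' : ∃ m', m' < k ∧ IsNType m' B'' := by
    match k, hk with
    | 2, _ =>
      obtain ⟨-, -, -, -, hall⟩ := isNType_two.mp hN
      rcases hall (m+1) B'' hproper hconn with h | h
      · exact ⟨0, by omega, isNType_zero.mpr h⟩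
      · exact ⟨1, by omega, isNType_one.mpr h⟩
    | (k+3), _ =>
      obtain ⟨-, -, -, hall⟩ := isNType_succ.mp hN
      obtain ⟨m', hm', h⟩ := hall (m+1) B'' hproper hconn
      exact ⟨m', hm', h⟩
  obtain ⟨m', hm'k, hNm'⟩ := hB'
  have hIsub : IsIndecomposable (B''.submatrix e e) := hBeq ▸ hBind
  have hj0 : iy ∉ Set.range e := by
    rintro ⟨p, hp⟩
    exact heiy p hp
  have hp0 : B'' (e i1) iy ≠ 0 := by
    show A (f' (e i1)) (f' iy) ≠ 0
    rw [hfe, hfiy, hi1]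
    exact hxy
  obtain ⟨m0, hm0lt, hNm0⟩ := descend hNm' hemono hm0 (Nat.lt_succ_self m) hIsub hj0 hp0
  have hBN : IsNType (k - 1) (B''.submatrix e e) := hBeq ▸ hB
  exact isNType_unique (k-1) m0 (by omega) hNm0 hBN

/-- Corollary 3.1 of the paper: for a GCM of type `N_{k,n}` with
`k ≥ 2`, every principal submatrix of type `N_{k-1}` has dimension at least `n - 1`;
hence, if it is a proper principal submatrix, its dimension is exactly `n - 1`. -/
theorem dim_ge_of_isNType_principal_submatrix {k n m : ℕ} (hk : 2 ≤ k)
    {A : Matrix (Fin n) (Fin n) ℤ} (hA : IsGCM A) (hN : IsNType k A)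
    {B : Matrix (Fin m) (Fin m) ℤ}
    (hsub : IsPrincipalSubmatrix B A) (hB : IsNType (k - 1) B) :
    n - 1 ≤ m ∧ (IsProperPrincipalSubmatrix B A → m = n - 1) := by
  obtain ⟨f, hf, hBeq⟩ := hsub
  subst hBeq
  have h1 : n - 1 ≤ m := by
    by_contra h
    push_neg at h
    exact main_step hk hN hf hB (by omega)
  exact ⟨h1, fun hp => by obtain ⟨-, -, hmn⟩ := hp; omega⟩
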